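/- Let N ≥ 1, k ≥ 1 and m ≥ 0 be natural numbers. Let B_0, …, B_m be open cubes in ℝ^N with centers p_0, …, p_m whose closures are pairwise disjoint and contained in the open unit cube (0,1)^N. Then the ordered configuration space Conf(k, [0,1]^N \ (B_0 ∪ … ∪ B_m)) is homotopy equivalent to the ordered configuration space Conf(k, ℝ^N \ {p_0, …, p_m}); that is, there are continuous maps in both directions whose two composites are homotopic to the respective identity maps. -/

import Mathlib

/-- The ordered configuration space of `k` points in `X`: the space of injective
maps `Fin k → X`, topologized as a subspace of the product space `X^k`. -/
abbrev Conf (k : ℕ) (X : Type*) [TopologicalSpace X] : Type _ :=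
  {f : Fin k → X // Function.Injective f}

/-- The open cube in `ℝ^N` with center `c` and radius `ε`. -/
def openCube (N : ℕ) (c : Fin N → ℝ) (ε : ℝ) : Set (Fin N → ℝ) :=
  {x | ∀ i, |x i - c i| < ε}

/-- The closed unit cube `[0,1]^N`. -/
def unitCube (N : ℕ) : Set (Fin N → ℝ) :=
  {x | ∀ i, x i ∈ Set.Icc (0 : ℝ) 1}

/-- The open unit cube `(0,1)^N`. -/
def openUnitCube (N : ℕ) : Set (Fin N → ℝ) :=
  {x | ∀ i, x i ∈ Set.Ioo (0 : ℝ) 1}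


open Metric Set

section radial
variable {E : Type*} [NormedAddCommGroup E] [NormedSpace ℝ E]

noncomputable def radial (c : E) (σ : ℝ → ℝ) (x : E) : E :=
  c + (σ (dist x c) / dist x c) • (x - c)

lemma radial_self (c : E) (σ : ℝ → ℝ) : radial c σ c = c := by
  simp [radial]

lemma dist_radial {c x : E} (σ : ℝ → ℝ) (hx : x ≠ c) (hσ : 0 ≤ σ (dist x c)) :
    dist (radial c σ x) c = σ (dist x c) := by
  have hd : dist x c ≠ 0 := dist_ne_zero.2 hx
  have hd' : (0:ℝ) < dist x c := dist_pos.2 hx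
  rw [radial, dist_eq_norm, add_sub_cancel_left, norm_smul, Real.norm_eq_abs,
    abs_of_nonneg (div_nonneg hσ hd'.le), ← dist_eq_norm, div_mul_cancel₀ _ hd]

lemma radial_eq_self {c x : E} {σ : ℝ → ℝ} (h : σ (dist x c) = dist x c) :
    radial c σ x = x := by
  rcases eq_or_ne x c with rfl | hx
  · exact radial_self _ σ
  · have hd : dist x c ≠ 0 := dist_ne_zero.2 hx
    rw [radial, h, div_self hd, one_smul, add_sub_cancel]

lemma radial_injective (c : E) {σ : ℝ → ℝ} (hpos : ∀ r, 0 < r → 0 < σ r)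
    (hinj : Set.InjOn σ (Set.Ioi 0)) : Function.Injective (radial c σ) := by
  have key : ∀ x : E, x ≠ c → radial c σ x ≠ c := by
    intro x hx
    have := dist_radial σ hx (hpos _ (dist_pos.2 hx)).le
    intro h
    rw [h, dist_self] at this
    exact absurd this (ne_of_lt (hpos _ (dist_pos.2 hx)))
  intro x y hxy
  rcases eq_or_ne x c with hxc | hx
  · rcases eq_or_ne y c with hyc | hy
    · rw [hxc, hyc]
    · rw [hxc, radial_self] at hxy
      exact absurd hxy.symm (key y hy)
  · rcases eq_or_ne y c with hyc | hy
    · rw [hyc, radial_self] at hxy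
      exact absurd hxy (key x hx)
    · have hdx : (0:ℝ) < dist x c := dist_pos.2 hx
      have hdy : (0:ℝ) < dist y c := dist_pos.2 hy
      have hσx := hpos _ hdx
      have hσy := hpos _ hdy
      have hdist : σ (dist x c) = σ (dist y c) := by
        rw [← dist_radial σ hx hσx.le, ← dist_radial σ hy hσy.le, hxy]
      have hreq : dist x c = dist y c := hinj hdx hdy hdist
      have ha : σ (dist x c) / dist x c ≠ 0 := (div_pos hσx hdx).ne'
      have : (σ (dist x c) / dist x c) • (x - c) = (σ (dist x c) / dist x c) • (y - c) := by
        have := hxy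
        rw [radial, radial, ← hreq, hdist, ← hreq] at this
        exact add_left_cancel this
      have := smul_right_injective E ha this
      exact sub_left_injective this

lemma radial_continuousAt {c : E} {σ : ℝ → ℝ → ℝ} {t : ℝ} {x : E} (hx : x ≠ c)
    (hσ : ContinuousAt (fun z : ℝ × ℝ => σ z.1 z.2) (t, dist x c)) :
    ContinuousAt (fun z : ℝ × E => radial c (σ z.1) z.2) (t, x) := by
  have hd : dist x c ≠ 0 := dist_ne_zero.2 hx
  have hpre : ContinuousAt (fun z : ℝ × E => ((z.1, dist z.2 c) : ℝ × ℝ)) (t, x) := by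
    fun_prop
  have h1 : ContinuousAt ((fun z : ℝ × ℝ => σ z.1 z.2) ∘ (fun z : ℝ × E => ((z.1, dist z.2 c) : ℝ × ℝ))) (t, x) :=
    ContinuousAt.comp (f := fun z : ℝ × E => ((z.1, dist z.2 c) : ℝ × ℝ)) hσ hpre
  have h2 : ContinuousAt (fun z : ℝ × E => dist z.2 c) (t, x) := by fun_prop
  exact (continuousAt_const.add ((h1.div h2 hd).smul (by fun_prop)))

end radial

noncomputable def blowσ (ε R t r : ℝ) : ℝ := (1 - t) * r + t * max r (ε + r * ((R - ε) / R))

section blow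
variable {ε R t r a b : ℝ} (hε : 0 < ε) (hεR : ε < R)

lemma blowσ_zero : blowσ ε R 0 r = r := by simp [blowσ]

lemma blowσ_ge (ht0 : 0 ≤ t) (ht1 : t ≤ 1) : r ≤ blowσ ε R t r := by
  have h := le_max_left r (ε + r * ((R - ε) / R))
  unfold blowσ; nlinarith

lemma blowσ_pos (ht0 : 0 ≤ t) (ht1 : t ≤ 1) (hr : 0 < r) : 0 < blowσ ε R t r :=
  lt_of_lt_of_le hr (blowσ_ge ht0 ht1)

include hε hεR in
lemma blowσ_lt (ht0 : 0 ≤ t) (ht1 : t ≤ 1) (hab : a < b) :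
    blowσ ε R t a < blowσ ε R t b := by
  have hR : (0:ℝ) < R := hε.trans hεR
  have hslope : 0 < (R - ε) / R := div_pos (by linarith) hR
  have hmax : max a (ε + a * ((R - ε) / R)) < max b (ε + b * ((R - ε) / R)) :=
    max_lt_max hab (by nlinarith)
  rcases ht0.eq_or_lt with h | h
  · simp [blowσ, ← h, hab]
  · unfold blowσ
    exact add_lt_add_of_le_of_lt (mul_le_mul_of_nonneg_left hab.le (by linarith))
      (mul_lt_mul_of_pos_left hmax h)

include hε hεR in
lemma blowσ_le_R (ht0 : 0 ≤ t) (ht1 : t ≤ 1) (hr0 : 0 ≤ r) (hrR : r ≤ R) :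
    blowσ ε R t r ≤ R := by
  have hR : (0:ℝ) < R := hε.trans hεR
  have hslope : 0 ≤ (R - ε) / R := (div_pos (by linarith) hR).le
  have h1 : r * ((R - ε) / R) ≤ R * ((R - ε) / R) := mul_le_mul_of_nonneg_right hrR hslope
  have h2 : R * ((R - ε) / R) = R - ε := by field_simp
  have hmax : max r (ε + r * ((R - ε) / R)) ≤ R := max_le hrR (by nlinarith)
  unfold blowσ; nlinarith

include hε hεR in
lemma blowσ_eq_of_ge (ht0 : 0 ≤ t) (hRr : R ≤ r) : blowσ ε R t r = r := by
  have hR : (0:ℝ) < R := hε.trans hεR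
  have h2 : R * ((R - ε) / R) = R - ε := by field_simp
  have h1 : R * ((R - ε) / R) ≤ r * ((R - ε) / R) :=
    mul_le_mul_of_nonneg_right hRr (div_pos (by linarith) hR).le
  have hle : ε + r * ((R - ε) / R) ≤ r := by
    have h3 : r * ((R - ε) / R) = r * (R - ε) / R := by ring
    have h4 : r * (R - ε) / R ≤ r - ε := by
      rw [div_le_iff₀ hR]; nlinarith
    linarith [h3 ▸ h4]
  unfold blowσ
  rw [max_eq_left hle]; ring

include hε hεR in
lemma blowσ_one_gt (hr : 0 < r) : ε < blowσ ε R 1 r := by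
  have hR : (0:ℝ) < R := hε.trans hεR
  have hslope : 0 < (R - ε) / R := div_pos (by linarith) hR
  have h1 : ε < ε + r * ((R - ε) / R) := by nlinarith
  have h2 : ε + r * ((R - ε) / R) ≤ max r (ε + r * ((R - ε) / R)) := le_max_right _ _
  unfold blowσ; nlinarith [le_max_left r (ε + r * ((R - ε) / R))]

lemma blowσ_cont : Continuous (fun z : ℝ × ℝ => blowσ ε R z.1 z.2) := by
  unfold blowσ; fun_prop

end blow

noncomputable def gfun (b r : ℝ) : ℝ := b + (1/2 - b) - (1/2 - b) / (1 + (r - b))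

noncomputable def compσ (b t r : ℝ) : ℝ := (1 - t) * r + t * min r (gfun b r)

section comp
variable {b t r a a' : ℝ} (hb : 0 < b) (hb2 : b < 1/2)

include hb2 in
lemma gfun_den_pos (hr : 0 ≤ r) : 0 < 1 + (r - b) := by linarith

include hb2 in
lemma gfun_lt_half (hr : 0 ≤ r) : gfun b r < 1/2 := by
  have hden := gfun_den_pos hb2 hr
  have := div_pos (show (0:ℝ) < 1/2 - b by linarith) hden
  unfold gfun; linarith

include hb2 in
lemma le_gfun_of_le (hr : 0 ≤ r) (hrb : r ≤ b) : r ≤ gfun b r := by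
  have hden := gfun_den_pos hb2 hr
  have key : (1/2 - b) / (1 + (r - b)) * (1 + (r - b)) = 1/2 - b :=
    div_mul_cancel₀ _ hden.ne'
  unfold gfun
  nlinarith [mul_nonneg (sub_nonneg.2 hrb) (show (0:ℝ) ≤ 1/2 + r by linarith)]

include hb2 in
lemma gfun_le_of_ge (hr : 0 ≤ r) (hrb : b ≤ r) : gfun b r ≤ r := by
  have hden := gfun_den_pos hb2 hr
  have key : (1/2 - b) / (1 + (r - b)) * (1 + (r - b)) = 1/2 - b :=
    div_mul_cancel₀ _ hden.ne'
  unfold gfun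
  nlinarith [mul_nonneg (sub_nonneg.2 hrb) (show (0:ℝ) ≤ 1/2 + r by linarith)]

include hb hb2 in
lemma gfun_ge_b (hr : b ≤ r) : b ≤ gfun b r := by
  have h1 : (1/2 - b) / (1 + (r - b)) ≤ 1/2 - b :=
    div_le_self (by linarith) (by linarith)
  unfold gfun; linarith

include hb hb2 in
lemma min_gfun_pos (hr : 0 < r) : 0 < min r (gfun b r) := by
  rcases le_total r b with h | h
  · rw [min_eq_left (le_gfun_of_le hb2 hr.le h)]; exact hr
  · exact lt_min hr (lt_of_lt_of_le hb (gfun_ge_b hb hb2 h))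

lemma compσ_zero : compσ b 0 r = r := by simp [compσ]

include hb hb2 in
lemma compσ_pos (ht0 : 0 ≤ t) (ht1 : t ≤ 1) (hr : 0 < r) : 0 < compσ b t r := by
  have h := min_gfun_pos hb hb2 hr
  have h2 := min_le_left r (gfun b r)
  unfold compσ; nlinarith

lemma compσ_le (ht0 : 0 ≤ t) (ht1 : t ≤ 1) (hr : 0 ≤ r) : compσ b t r ≤ r := by
  have h2 := min_le_left r (gfun b r)
  unfold compσ; nlinarith

include hb2 in
lemma gfun_lt (h0 : 0 ≤ a) (hab : a < a') : gfun b a < gfun b a' := by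
  have hda := gfun_den_pos hb2 h0
  have hda' := gfun_den_pos hb2 (h0.trans hab.le)
  have : (1/2 - b) / (1 + (a' - b)) < (1/2 - b) / (1 + (a - b)) :=
    div_lt_div_of_pos_left (by linarith) hda (by linarith)
  unfold gfun; linarith

include hb2 in
lemma compσ_lt (ht0 : 0 ≤ t) (ht1 : t ≤ 1) (h0 : 0 ≤ a) (hab : a < a') :
    compσ b t a < compσ b t a' := by
  have hmin : min a (gfun b a) < min a' (gfun b a') :=
    min_lt_min hab (gfun_lt hb2 h0 hab)
  rcases ht0.eq_or_lt with h | h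
  · simp [compσ, ← h, hab]
  · unfold compσ
    exact add_lt_add_of_le_of_lt (mul_le_mul_of_nonneg_left hab.le (by linarith))
      (mul_lt_mul_of_pos_left hmin h)

include hb2 in
lemma compσ_eq_of_le (hr : 0 ≤ r) (hrb : r ≤ b) : compσ b t r = r := by
  unfold compσ
  rw [min_eq_left (le_gfun_of_le hb2 hr hrb)]; ring

include hb2 in
lemma compσ_one_lt_half (hr : 0 ≤ r) : compσ b 1 r < 1/2 := by
  have := (min_le_right r (gfun b r)).trans_lt (gfun_lt_half hb2 hr)
  unfold compσ; linarith

lemma compσ_contAt (hden : 1 + (r - b) ≠ 0) :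
    ContinuousAt (fun z : ℝ × ℝ => compσ b z.1 z.2) (t, r) := by
  have h1 : ContinuousAt (fun z : ℝ × ℝ => gfun b z.2) (t, r) := by
    unfold gfun
    exact (continuousAt_const.sub (ContinuousAt.div continuousAt_const (by fun_prop) hden))
  unfold compσ
  exact ((continuousAt_const.sub continuousAt_fst).mul continuousAt_snd).add
    (continuousAt_fst.mul (continuousAt_snd.min h1))
end comp

section confMachinery
open Set

lemma injOn_of_lt {f : ℝ → ℝ} (h : ∀ a a' : ℝ, 0 ≤ a → a < a' → f a < f a') :
    Set.InjOn f (Set.Ioi 0) := by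
  intro a ha a' ha' hf
  by_contra hne
  rcases Ne.lt_or_gt hne with hlt | hlt
  · exact absurd hf (h a a' (le_of_lt ha) hlt).ne
  · exact absurd hf.symm (h a' a (le_of_lt ha') hlt).ne

noncomputable def confInduced {X Y : Type*} [TopologicalSpace X] [TopologicalSpace Y] {k : ℕ}
    (e : X → Y) (hc : Continuous e) (he : Function.Injective e) :
    C(Conf k X, Conf k Y) where
  toFun f := ⟨fun i => e (f.1 i), fun i i' h => f.2 (he h)⟩
  continuous_toFun := by
    apply Continuous.subtype_mk
    apply continuous_pi
    intro i
    exact hc.comp ((continuous_apply i).comp continuous_subtype_val)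

@[simp] lemma confInduced_apply {X Y : Type*} [TopologicalSpace X] [TopologicalSpace Y] {k : ℕ}
    (e : X → Y) (hc : Continuous e) (he : Function.Injective e) (f : Conf k X) (i : Fin k) :
    (confInduced e hc he f).1 i = e (f.1 i) := rfl

noncomputable def confHomotopyMap {X : Type*} [TopologicalSpace X] {S : Set X} {k : ℕ}
    (H : ℝ × X → X)
    (hmaps : ∀ t : ℝ, 0 ≤ t → t ≤ 1 → ∀ x ∈ S, H (t, x) ∈ S)
    (hinj : ∀ t : ℝ, 0 ≤ t → t ≤ 1 → Function.Injective fun x => H (t, x))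
    (hcont : ∀ t : ℝ, 0 ≤ t → t ≤ 1 → ∀ x ∈ S, ContinuousAt H (t, x)) :
    C(unitInterval × Conf k ↥S, Conf k ↥S) where
  toFun w :=
    ⟨fun i => ⟨H (↑w.1, ↑(w.2.1 i)), hmaps _ w.1.2.1 w.1.2.2 _ (w.2.1 i).2⟩,
     fun i i' hii =>
       w.2.2 (Subtype.ext ((hinj _ w.1.2.1 w.1.2.2) (congrArg Subtype.val hii)))⟩
  continuous_toFun := by
    apply Continuous.subtype_mk
    apply continuous_pi
    intro i
    apply Continuous.subtype_mk
    have hφ : Continuous (fun w : unitInterval × Conf k ↥S =>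
        ((↑w.1 : ℝ), (↑(w.2.1 i) : X))) := by
      refine Continuous.prodMk (continuous_subtype_val.comp continuous_fst) ?_
      exact continuous_subtype_val.comp
        ((continuous_apply i).comp (continuous_subtype_val.comp continuous_snd))
    rw [continuous_iff_continuousAt]
    intro w
    exact ContinuousAt.comp
      (f := fun w : unitInterval × Conf k ↥S => ((↑w.1 : ℝ), (↑(w.2.1 i) : X)))
      (hcont _ w.1.2.1 w.1.2.2 _ (w.2.1 i).2) hφ.continuousAt

@[simp] lemma confHomotopyMap_apply {X : Type*} [TopologicalSpace X] {S : Set X} {k : ℕ}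
    (H : ℝ × X → X) (hmaps) (hinj) (hcont) (w : unitInterval × Conf k ↥S) (i : Fin k) :
    ((confHomotopyMap H hmaps hinj hcont w).1 i : X) = H (↑w.1, ↑(w.2.1 i)) := rfl

end confMachinery

open Metric Set

/-- Let `B_0, …, B_m` be open cubes in `ℝ^N` with centers `p_0, …, p_m` whose
closures are pairwise disjoint and contained in the open unit cube.  Then the
ordered configuration space of `k` points in `[0,1]^N \ (B_0 ∪ … ∪ B_m)` is
homotopy equivalent to the ordered configuration space of `k` points in
`ℝ^N \ {p_0, …, p_m}`. -/
theorem conf_unitCube_minus_cubes_homotopyEquiv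
    (N k m : ℕ) (hN : 1 ≤ N) (hk : 1 ≤ k)
    (p : Fin (m + 1) → (Fin N → ℝ)) (ε : Fin (m + 1) → ℝ) (hε : ∀ j, 0 < ε j)
    (hdisj : ∀ j j' : Fin (m + 1), j ≠ j' →
      Disjoint (closure (openCube N (p j) (ε j))) (closure (openCube N (p j') (ε j'))))
    (hsub : ∀ j, closure (openCube N (p j) (ε j)) ⊆ openUnitCube N) :
    Nonempty
      (ContinuousMap.HomotopyEquiv
        (Conf k ↥(unitCube N \ ⋃ j, openCube N (p j) (ε j)))
        (Conf k ↥((Set.range p)ᶜ))) := by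
  classical
  set q : Fin N → ℝ := fun _ => (1/2 : ℝ) with hqdef
  -- coordinates
  have coord : ∀ a : ℝ, (a ∈ Set.Icc (0:ℝ) 1) ↔ |a - 1/2| ≤ 1/2 := by
    intro a; rw [Set.mem_Icc, abs_le]; constructor <;> intro h <;> constructor <;> linarith
  have coord' : ∀ a : ℝ, (a ∈ Set.Ioo (0:ℝ) 1) ↔ |a - 1/2| < 1/2 := by
    intro a; rw [Set.mem_Ioo, abs_lt]; constructor <;> intro h <;> constructor <;> linarith
  have hcube : ∀ (c : Fin N → ℝ) (r : ℝ), 0 < r → openCube N c r = Metric.ball c r := by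
    intro c r hr
    ext x
    simp only [openCube, Set.mem_setOf_eq, Metric.mem_ball]
    rw [dist_pi_lt_iff hr]
    refine forall_congr' fun i => ?_
    rw [Real.dist_eq]
  have hclosure : ∀ j, closure (openCube N (p j) (ε j)) = closedBall (p j) (ε j) := by
    intro j; rw [hcube _ _ (hε j), closure_ball _ (hε j).ne']
  have hunit : unitCube N = closedBall q (1/2) := by
    ext x
    simp only [unitCube, Set.mem_setOf_eq, Metric.mem_closedBall]
    rw [dist_pi_le_iff (by norm_num : (0:ℝ) ≤ 1/2)]
    refine forall_congr' fun i => ?_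
    rw [Real.dist_eq]
    exact coord (x i)
  have hounit : openUnitCube N = ball q (1/2) := by
    ext x
    simp only [openUnitCube, Set.mem_setOf_eq, Metric.mem_ball]
    rw [dist_pi_lt_iff (by norm_num : (0:ℝ) < 1/2)]
    refine forall_congr' fun i => ?_
    rw [Real.dist_eq]
    exact coord' (x i)
  -- choice of b
  have hKcpt : IsCompact (⋃ j, closedBall (p j) (ε j)) :=
    isCompact_iUnion fun j => isCompact_closedBall _ _
  have hKsub : (⋃ j, closedBall (p j) (ε j)) ⊆ ball q (1/2) := by
    rw [← hounit]
    exact Set.iUnion_subset fun j => (hclosure j) ▸ hsub j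
  have hKne : (⋃ j, closedBall (p j) (ε j)).Nonempty :=
    ⟨p 0, Set.mem_iUnion.2 ⟨0, mem_closedBall_self (hε 0).le⟩⟩
  obtain ⟨x₀, hx₀K, hx₀max⟩ := hKcpt.exists_isMaxOn hKne
    ((continuous_id.dist continuous_const).continuousOn :
      ContinuousOn (fun x => dist x q) _)
  set b := max (dist x₀ q) (1/4) with hbdef
  have hb0 : (0:ℝ) < b := lt_of_lt_of_le (by norm_num) (le_max_right _ _)
  have hb2 : b < 1/2 := by
    refine max_lt ?_ (by norm_num)
    have := hKsub hx₀K; rwa [Metric.mem_ball] at this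
  have hKb : ∀ j, closedBall (p j) (ε j) ⊆ closedBall q b := by
    intro j x hx
    have hxK : x ∈ ⋃ j, closedBall (p j) (ε j) := Set.mem_iUnion.2 ⟨j, hx⟩
    have h1 : dist x q ≤ dist x₀ q := hx₀max hxK
    rw [Metric.mem_closedBall]
    exact le_trans h1 (le_max_left _ _)
  -- choice of δ
  have hpair : ∀ z : Fin (m+1) × Fin (m+1), ∃ d : ℝ, 0 < d ∧ (z.1 ≠ z.2 →
      Disjoint (cthickening d (closedBall (p z.1) (ε z.1)))
               (cthickening d (closedBall (p z.2) (ε z.2)))) := by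
    intro z
    by_cases hz : z.1 = z.2
    · exact ⟨1, by norm_num, fun h => absurd hz h⟩
    · have hd : Disjoint (closedBall (p z.1) (ε z.1)) (closedBall (p z.2) (ε z.2)) := by
        have := hdisj z.1 z.2 hz
        rwa [hclosure z.1, hclosure z.2] at this
      obtain ⟨d, hd0, hdd⟩ := hd.exists_cthickenings (isCompact_closedBall _ _)
        isClosed_closedBall
      exact ⟨d, hd0, fun _ => hdd⟩
  choose D hD0 hDd using hpair
  set δ := min ((1/2 - b)/2) (Finset.univ.inf' Finset.univ_nonempty D) with hδdef
  have hδ0 : 0 < δ :=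
    lt_min (by linarith) ((Finset.lt_inf'_iff Finset.univ_nonempty).2 fun z _ => hD0 z)
  have hδle : ∀ z, δ ≤ D z := fun z =>
    le_trans (min_le_right _ _) (Finset.inf'_le _ (Finset.mem_univ z))
  have hδb : b + δ < 1/2 := by
    have h1 : δ ≤ (1/2 - b)/2 := min_le_left _ _
    linarith
  set R : Fin (m+1) → ℝ := fun j => ε j + δ with hRdef
  set bb := b + δ with hbbdef
  have hbb0 : 0 < bb := by rw [hbbdef]; linarith
  have hbb2 : bb < 1/2 := hδb
  have hεR : ∀ j, ε j < R j := fun j => by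
    rw [hRdef]; exact lt_add_of_pos_right _ hδ0
  have hR0 : ∀ j, 0 < R j := fun j => (hε j).trans (hεR j)
  have hthick : ∀ j, closedBall (p j) (R j) = cthickening δ (closedBall (p j) (ε j)) := by
    intro j
    rw [cthickening_closedBall hδ0.le (hε j).le]
    congr 1
    simp only [hRdef]
    ring
  have hRdisj : ∀ j j', j ≠ j' →
      Disjoint (closedBall (p j) (R j)) (closedBall (p j') (R j')) := by
    intro j j' h
    rw [hthick j, hthick j']
    exact Disjoint.mono (cthickening_mono (hδle (j, j')) _)
      (cthickening_mono (hδle (j, j')) _) (hDd (j, j') h)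
  have hRsub : ∀ j, closedBall (p j) (R j) ⊆ closedBall q bb := by
    intro j
    rw [hthick j]
    refine subset_trans (cthickening_subset_of_subset δ (hKb j)) ?_
    rw [cthickening_closedBall hδ0.le hb0.le, hbbdef, add_comm]
  have hpbb : ∀ j, dist (p j) q ≤ bb := fun j =>
    hRsub j (mem_closedBall_self (hR0 j).le)
  -- the sets
  set Yset := (Set.range p)ᶜ with hYdef
  have hYmem : ∀ x, x ∈ Yset ↔ ∀ j, x ≠ p j := by
    intro x
    simp only [hYdef, Set.mem_compl_iff, Set.mem_range, not_exists]
    exact ⟨fun h j hx => h j hx.symm, fun h j hx => h j hx.symm⟩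
  have hAeq : (unitCube N \ ⋃ j, openCube N (p j) (ε j)) =
      closedBall q (1/2) \ ⋃ j, ball (p j) (ε j) := by
    rw [hunit]
    congr 1
    exact Set.iUnion_congr fun j => hcube _ _ (hε j)
  set Aset := closedBall q (1/2) \ ⋃ j, ball (p j) (ε j) with hAdef
  have hAmem : ∀ x, x ∈ Aset ↔ (dist x q ≤ 1/2 ∧ ∀ j, ε j ≤ dist x (p j)) := by
    intro x
    simp only [hAdef, Set.mem_diff, Metric.mem_closedBall, Set.mem_iUnion,
      Metric.mem_ball, not_exists, not_lt]
  have hAY : Aset ⊆ Yset := by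
    intro x hx
    rw [hYmem]
    intro j hxp
    have h2 := ((hAmem x).1 hx).2 j
    rw [hxp, dist_self] at h2
    linarith [hε j]
  -- the blow-up maps
  set Blow : Fin (m+1) → ℝ × (Fin N → ℝ) → (Fin N → ℝ) :=
    fun j z => radial (p j) (blowσ (ε j) (R j) z.1) z.2 with hBdef
  have hBinj : ∀ j (t : ℝ), 0 ≤ t → t ≤ 1 → Function.Injective fun x => Blow j (t, x) := by
    intro j t ht0 ht1
    simp only [hBdef]
    exact radial_injective (p j) (fun r hr => blowσ_pos ht0 ht1 hr)
      (injOn_of_lt fun a a' ha haa => blowσ_lt (hε j) (hεR j) ht0 ht1 haa)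
  have hB0 : ∀ j x, Blow j (0, x) = x := by
    intro j x
    simp only [hBdef]
    exact radial_eq_self blowσ_zero
  have hBeqid : ∀ j (t : ℝ), 0 ≤ t → ∀ x, R j ≤ dist x (p j) → Blow j (t, x) = x := by
    intro j t ht0 x hx
    simp only [hBdef]
    exact radial_eq_self (blowσ_eq_of_ge (hε j) (hεR j) ht0 hx)
  have hBfix : ∀ j (t : ℝ), 0 ≤ t → ∀ j', Blow j (t, p j') = p j' := by
    intro j t ht0 j'
    by_cases h : j' = j
    · subst h; simp only [hBdef]; exact radial_self _ _
    · refine hBeqid j t ht0 _ ?_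
      have hmem : p j' ∈ closedBall (p j') (R j') := mem_closedBall_self (hR0 j').le
      have hnot := Set.disjoint_right.1 (hRdisj j j' (fun hh => h hh.symm)) hmem
      rw [Metric.mem_closedBall, not_le] at hnot
      exact hnot.le
  have hBY : ∀ j (t : ℝ), 0 ≤ t → t ≤ 1 → ∀ x ∈ Yset, Blow j (t, x) ∈ Yset := by
    intro j t ht0 ht1 x hx
    rw [hYmem] at hx ⊢
    intro j' h
    exact hx j' (hBinj j t ht0 ht1 (h.trans (hBfix j t ht0 j').symm))
  have hBdist : ∀ j (t : ℝ), 0 ≤ t → t ≤ 1 → ∀ x, x ≠ p j →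
      dist (Blow j (t, x)) (p j) = blowσ (ε j) (R j) t (dist x (p j)) := by
    intro j t ht0 ht1 x hx
    simp only [hBdef]
    exact dist_radial _ hx (blowσ_pos ht0 ht1 (dist_pos.2 hx)).le
  have hBA : ∀ j (t : ℝ), 0 ≤ t → t ≤ 1 → ∀ x ∈ Aset, Blow j (t, x) ∈ Aset := by
    intro j t ht0 ht1 x hx
    rcases le_or_gt (R j) (dist x (p j)) with hout | hin
    · rw [hBeqid j t ht0 x hout]; exact hx
    · have hxA := (hAmem x).1 hx
      have hxne : x ≠ p j := by
        intro h; have h2 := hxA.2 j; rw [h, dist_self] at h2; linarith [hε j]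
      have hd := hBdist j t ht0 ht1 x hxne
      have hgeε : ε j ≤ dist (Blow j (t, x)) (p j) := by
        rw [hd]; exact le_trans (hxA.2 j) (blowσ_ge ht0 ht1)
      have hleR : dist (Blow j (t, x)) (p j) ≤ R j := by
        rw [hd]; exact blowσ_le_R (hε j) (hεR j) ht0 ht1 dist_nonneg hin.le
      rw [hAmem]
      constructor
      · have hmem : Blow j (t, x) ∈ closedBall q bb := hRsub j (by rwa [Metric.mem_closedBall])
        rw [Metric.mem_closedBall] at hmem
        linarith
      · intro j'
        by_cases hj : j' = j
        · subst hj; exact hgeε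
        · have hmem : Blow j (t, x) ∈ closedBall (p j) (R j) := by
            rwa [Metric.mem_closedBall]
          have hnot := Set.disjoint_left.1 (hRdisj j j' (fun hh => hj hh.symm)) hmem
          rw [Metric.mem_closedBall, not_le] at hnot
          linarith [hεR j']
  have hBavoid1 : ∀ j x, x ≠ p j → ε j < dist (Blow j (1, x)) (p j) := by
    intro j x hx
    rcases le_or_gt (R j) (dist x (p j)) with hout | hin
    · rw [hBeqid j 1 zero_le_one x hout]; exact lt_of_lt_of_le (hεR j) hout
    · rw [hBdist j 1 zero_le_one le_rfl x hx]
      exact blowσ_one_gt (hε j) (hεR j) (dist_pos.2 hx)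
  have hBpres : ∀ j j' (t : ℝ), 0 ≤ t → t ≤ 1 → ∀ x, ε j' < dist x (p j') →
      ε j' < dist (Blow j (t, x)) (p j') := by
    intro j j' t ht0 ht1 x hx
    rcases le_or_gt (R j) (dist x (p j)) with hout | hin
    · rw [hBeqid j t ht0 x hout]; exact hx
    · by_cases hxne : x = p j
      · rw [hxne, hBfix j t ht0 j]; rwa [hxne] at hx
      · by_cases hj : j' = j
        · subst hj
          rw [hBdist j' t ht0 ht1 x hxne]
          exact lt_of_lt_of_le hx (blowσ_ge ht0 ht1)
        · have hleR : dist (Blow j (t, x)) (p j) ≤ R j := by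
            rw [hBdist j t ht0 ht1 x hxne]
            exact blowσ_le_R (hε j) (hεR j) ht0 ht1 dist_nonneg hin.le
          have hmem : Blow j (t, x) ∈ closedBall (p j) (R j) := by
            rwa [Metric.mem_closedBall]
          have hnot := Set.disjoint_left.1 (hRdisj j j' (fun hh => hj hh.symm)) hmem
          rw [Metric.mem_closedBall, not_le] at hnot
          linarith [hεR j']
  have hBcont : ∀ j (t : ℝ) x, x ≠ p j → ContinuousAt (Blow j) (t, x) := by
    intro j t x hx
    simp only [hBdef]
    exact radial_continuousAt hx (blowσ_cont.continuousAt)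
  -- the composition of all blow-ups
  set BlowL : List (Fin (m+1)) → ℝ × (Fin N → ℝ) → (Fin N → ℝ) :=
    fun l z => l.foldr (fun j y => Blow j (z.1, y)) z.2 with hBLdef
  have hBLcons : ∀ j l z, BlowL (j :: l) z = Blow j (z.1, BlowL l z) := by
    intro j l z; simp only [hBLdef, List.foldr_cons]
  have hBLnil : ∀ z, BlowL [] z = z.2 := fun z => rfl
  have hL0 : ∀ l x, BlowL l (0, x) = x := by
    intro l x
    induction l with
    | nil => rfl
    | cons j l ih => rw [hBLcons, ih]; exact hB0 j x
  have hLinj : ∀ l (t : ℝ), 0 ≤ t → t ≤ 1 → Function.Injective fun x => BlowL l (t, x) := by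
    intro l t ht0 ht1
    induction l with
    | nil => exact fun a b h => h
    | cons j l ih =>
      intro x y h
      simp only [hBLcons] at h
      exact ih (hBinj j t ht0 ht1 h)
  have hLY : ∀ l (t : ℝ), 0 ≤ t → t ≤ 1 → ∀ x ∈ Yset, BlowL l (t, x) ∈ Yset := by
    intro l t ht0 ht1 x hx
    induction l with
    | nil => exact hx
    | cons j l ih => rw [hBLcons]; exact hBY j t ht0 ht1 _ ih
  have hLA : ∀ l (t : ℝ), 0 ≤ t → t ≤ 1 → ∀ x ∈ Aset, BlowL l (t, x) ∈ Aset := by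
    intro l t ht0 ht1 x hx
    induction l with
    | nil => exact hx
    | cons j l ih => rw [hBLcons]; exact hBA j t ht0 ht1 _ ih
  have hLavoid : ∀ l x, x ∈ Yset → ∀ j ∈ l, ε j < dist (BlowL l (1, x)) (p j) := by
    intro l x hx
    induction l with
    | nil => intro j hj; exact absurd hj List.not_mem_nil
    | cons j' l ih =>
      intro j hj
      rw [hBLcons]
      rcases List.mem_cons.1 hj with h | h
      · subst h
        refine hBavoid1 j _ ?_
        have := hLY l 1 zero_le_one le_rfl x hx
        rw [hYmem] at this
        exact this j
      · exact hBpres j' j 1 zero_le_one le_rfl _ (ih j h)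
  have hLcont : ∀ l (t : ℝ), 0 ≤ t → t ≤ 1 → ∀ x ∈ Yset, ContinuousAt (BlowL l) (t, x) := by
    intro l t ht0 ht1 x hx
    induction l with
    | nil => exact continuousAt_snd
    | cons j l ih =>
      have hyY : BlowL l (t, x) ∈ Yset := hLY l t ht0 ht1 x hx
      have hyne : BlowL l (t, x) ≠ p j := (hYmem _).1 hyY j
      have hψ : ContinuousAt (fun z : ℝ × (Fin N → ℝ) => (z.1, BlowL l z)) (t, x) :=
        continuousAt_fst.prodMk ih
      have houter := hBcont j t _ hyne
      have hcomp := ContinuousAt.comp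
        (f := fun z : ℝ × (Fin N → ℝ) => (z.1, BlowL l z)) houter hψ
      refine hcomp.congr ?_
      filter_upwards with z
      rw [Function.comp_apply, hBLcons]
  -- the compression map
  set Cmp : ℝ × (Fin N → ℝ) → (Fin N → ℝ) :=
    fun z => radial q (compσ bb z.1) z.2 with hCdef
  have hCinj : ∀ (t : ℝ), 0 ≤ t → t ≤ 1 → Function.Injective fun x => Cmp (t, x) := by
    intro t ht0 ht1
    simp only [hCdef]
    exact radial_injective q (fun r hr => compσ_pos hbb0 hbb2 ht0 ht1 hr)
      (injOn_of_lt fun a a' ha haa => compσ_lt hbb2 ht0 ht1 ha haa)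
  have hC0 : ∀ x, Cmp (0, x) = x := by
    intro x; simp only [hCdef]; exact radial_eq_self compσ_zero
  have hCid : ∀ (t : ℝ) x, dist x q ≤ bb → Cmp (t, x) = x := by
    intro t x hx
    simp only [hCdef]
    exact radial_eq_self (compσ_eq_of_le hbb2 dist_nonneg hx)
  have hCdist : ∀ (t : ℝ), 0 ≤ t → t ≤ 1 → ∀ x, x ≠ q →
      dist (Cmp (t, x)) q = compσ bb t (dist x q) := by
    intro t ht0 ht1 x hx
    simp only [hCdef]
    exact dist_radial _ hx (compσ_pos hbb0 hbb2 ht0 ht1 (dist_pos.2 hx)).le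
  have hCle : ∀ (t : ℝ), 0 ≤ t → t ≤ 1 → ∀ x, dist (Cmp (t, x)) q ≤ dist x q := by
    intro t ht0 ht1 x
    by_cases hx : x = q
    · subst hx; rw [hCid t q (by rw [dist_self]; exact hbb0.le)]
    · rw [hCdist t ht0 ht1 x hx]
      exact compσ_le ht0 ht1 dist_nonneg
  have hCavoid : ∀ j (t : ℝ), 0 ≤ t → t ≤ 1 → ∀ y, ε j ≤ dist y (p j) →
      ε j ≤ dist (Cmp (t, y)) (p j) := by
    intro j t ht0 ht1 y hy
    by_contra hlt
    rw [not_le] at hlt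
    have hmem : Cmp (t, y) ∈ closedBall (p j) (ε j) := by
      rw [Metric.mem_closedBall]; exact hlt.le
    have hqb : dist (Cmp (t, y)) q ≤ bb := by
      have := hRsub j (Metric.closedBall_subset_closedBall (hεR j).le hmem)
      rwa [Metric.mem_closedBall] at this
    have hfix : Cmp (t, Cmp (t, y)) = Cmp (t, y) := hCid t _ hqb
    have : y = Cmp (t, y) := hCinj t ht0 ht1 hfix.symm
    rw [← this] at hlt
    linarith
  have hCY : ∀ (t : ℝ), 0 ≤ t → t ≤ 1 → ∀ x ∈ Yset, Cmp (t, x) ∈ Yset := by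
    intro t ht0 ht1 x hx
    rw [hYmem] at hx ⊢
    intro j h
    have hfix : Cmp (t, p j) = p j := hCid t _ (hpbb j)
    exact hx j (hCinj t ht0 ht1 (h.trans hfix.symm))
  have hCA : ∀ (t : ℝ), 0 ≤ t → t ≤ 1 → ∀ x ∈ Aset, Cmp (t, x) ∈ Aset := by
    intro t ht0 ht1 x hx
    have hxA := (hAmem x).1 hx
    rw [hAmem]
    exact ⟨le_trans (hCle t ht0 ht1 x) hxA.1, fun j => hCavoid j t ht0 ht1 x (hxA.2 j)⟩
  have hC1 : ∀ x, dist (Cmp (1, x)) q ≤ 1/2 := by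
    intro x
    by_cases hx : x = q
    · subst hx
      rw [hCid 1 q (by rw [dist_self]; exact hbb0.le), dist_self]
      norm_num
    · rw [hCdist 1 zero_le_one le_rfl x hx]
      exact (compσ_one_lt_half hbb2 dist_nonneg).le
  have hCcont : ∀ (t : ℝ) x, ContinuousAt Cmp (t, x) := by
    intro t x
    by_cases hx : x = q
    · subst hx
      have hopen : IsOpen {z : ℝ × (Fin N → ℝ) | dist z.2 q < bb} := by
        have : {z : ℝ × (Fin N → ℝ) | dist z.2 q < bb} =
            (fun z : ℝ × (Fin N → ℝ) => z.2) ⁻¹' ball q bb := by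
          ext z; simp [Metric.mem_ball]
        rw [this]
        exact isOpen_ball.preimage continuous_snd
      have hmem : (t, q) ∈ {z : ℝ × (Fin N → ℝ) | dist z.2 q < bb} := by
        simp only [Set.mem_setOf_eq, dist_self]; exact hbb0
      refine continuousAt_snd.congr ?_
      refine Filter.eventuallyEq_of_mem (hopen.mem_nhds hmem) ?_
      intro z hz
      exact (hCid z.1 z.2 (le_of_lt hz)).symm
    · simp only [hCdef]
      refine radial_continuousAt hx (compσ_contAt ?_)
      have := dist_nonneg (x := x) (y := q)
      intro h
      nlinarith [hbb2]
  -- the full homotopy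
  set Hmap : ℝ × (Fin N → ℝ) → (Fin N → ℝ) :=
    fun z => Cmp (z.1, BlowL (List.finRange (m+1)) z) with hHdef
  have hH0 : ∀ x, Hmap (0, x) = x := by
    intro x
    simp only [hHdef]
    rw [hL0, hC0]
  have hHinj : ∀ (t : ℝ), 0 ≤ t → t ≤ 1 → Function.Injective fun x => Hmap (t, x) := by
    intro t ht0 ht1 x y h
    simp only [hHdef] at h
    exact hLinj _ t ht0 ht1 (hCinj t ht0 ht1 h)
  have hHY : ∀ (t : ℝ), 0 ≤ t → t ≤ 1 → ∀ x ∈ Yset, Hmap (t, x) ∈ Yset := by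
    intro t ht0 ht1 x hx
    exact hCY t ht0 ht1 _ (hLY _ t ht0 ht1 x hx)
  have hHA : ∀ (t : ℝ), 0 ≤ t → t ≤ 1 → ∀ x ∈ Aset, Hmap (t, x) ∈ Aset := by
    intro t ht0 ht1 x hx
    exact hCA t ht0 ht1 _ (hLA _ t ht0 ht1 x hx)
  have hH1 : ∀ x ∈ Yset, Hmap (1, x) ∈ Aset := by
    intro x hx
    rw [hAmem]
    constructor
    · exact hC1 _
    · intro j
      have h1 := hLavoid (List.finRange (m+1)) x hx j (List.mem_finRange j)
      exact hCavoid j 1 zero_le_one le_rfl _ h1.le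
  have hHcont : ∀ (t : ℝ), 0 ≤ t → t ≤ 1 → ∀ x ∈ Yset, ContinuousAt Hmap (t, x) := by
    intro t ht0 ht1 x hx
    have hψ : ContinuousAt (fun z : ℝ × (Fin N → ℝ) => (z.1, BlowL (List.finRange (m+1)) z))
        (t, x) := continuousAt_fst.prodMk (hLcont _ t ht0 ht1 x hx)
    have hcomp := ContinuousAt.comp
      (f := fun z : ℝ × (Fin N → ℝ) => (z.1, BlowL (List.finRange (m+1)) z))
      (hCcont t _) hψ
    exact hcomp
  -- assembling the homotopy equivalence
  rw [hAeq]
  -- the reverse-time homotopy map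
  set Hrev : ℝ × (Fin N → ℝ) → (Fin N → ℝ) := fun z => Hmap (1 - z.1, z.2) with hHrdef
  have hrev_bound : ∀ t : ℝ, 0 ≤ t → t ≤ 1 → 0 ≤ 1 - t ∧ 1 - t ≤ 1 := by
    intro t h0 h1; constructor <;> linarith
  have hHrcont : ∀ (t : ℝ) (S : Set (Fin N → ℝ)), S ⊆ Yset → 0 ≤ t → t ≤ 1 →
      ∀ x ∈ S, ContinuousAt Hrev (t, x) := by
    intro t S hS ht0 ht1 x hx
    have hφ : ContinuousAt (fun z : ℝ × (Fin N → ℝ) => ((1:ℝ) - z.1, z.2)) (t, x) :=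
      (continuousAt_const.sub continuousAt_fst).prodMk continuousAt_snd
    have := ContinuousAt.comp
      (f := fun z : ℝ × (Fin N → ℝ) => ((1:ℝ) - z.1, z.2))
      (hHcont (1 - t) (by linarith) (by linarith) x (hS hx)) hφ
    exact this
  -- continuous maps between configuration spaces
  have hsY : ∀ y : ↥Yset, Hmap (1, ↑y) ∈ Aset := fun y => hH1 _ y.2
  set sfun : ↥Yset → ↥Aset := fun y => ⟨Hmap (1, ↑y), hsY y⟩ with hsdef
  have hscont : Continuous sfun := by
    refine Continuous.subtype_mk ?_ _
    rw [continuous_iff_continuousAt]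
    intro y
    have hφ : ContinuousAt (fun y : ↥Yset => ((1:ℝ), (y : Fin N → ℝ))) y :=
      (continuous_const.prodMk continuous_subtype_val).continuousAt
    exact ContinuousAt.comp (f := fun y : ↥Yset => ((1:ℝ), (y : Fin N → ℝ)))
      (hHcont 1 zero_le_one le_rfl ↑y y.2) hφ
  have hsinj : Function.Injective sfun := by
    intro y y' h
    exact Subtype.ext (hHinj 1 zero_le_one le_rfl (congrArg Subtype.val h))
  set F₁ : C(Conf k ↥Aset, Conf k ↥Yset) :=
    confInduced (Set.inclusion hAY) (continuous_inclusion hAY) (Set.inclusion_injective hAY)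
    with hF₁def
  set F₂ : C(Conf k ↥Yset, Conf k ↥Aset) := confInduced sfun hscont hsinj with hF₂def
  -- homotopy on the A side
  have homA : ((F₂.comp F₁).Homotopic (ContinuousMap.id (Conf k ↥Aset))) := by
    refine ⟨ContinuousMap.Homotopy.mk
      (confHomotopyMap (k := k) Hrev
        (fun t ht0 ht1 x hx => hHA (1 - t) (by linarith) (by linarith) x hx)
        (fun t ht0 ht1 => hHinj (1 - t) (by linarith) (by linarith))
        (fun t ht0 ht1 x hx => hHrcont t Aset hAY ht0 ht1 x hx)) ?_ ?_⟩
    · intro f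
      refine Subtype.ext (funext fun i => Subtype.ext ?_)
      show Hrev (((0 : unitInterval) : ℝ), ↑(f.1 i)) = ↑(((F₂.comp F₁) f).1 i)
      simp only [hHrdef, ContinuousMap.comp_apply, hF₂def, hF₁def, confInduced_apply,
        hsdef, Set.coe_inclusion]
      norm_num
    · intro f
      refine Subtype.ext (funext fun i => Subtype.ext ?_)
      show Hrev (((1 : unitInterval) : ℝ), ↑(f.1 i)) = ↑(f.1 i)
      simp only [hHrdef]
      norm_num
      exact hH0 _
  -- homotopy on the Y side
  have homY : ((F₁.comp F₂).Homotopic (ContinuousMap.id (Conf k ↥Yset))) := by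
    refine ⟨ContinuousMap.Homotopy.mk
      (confHomotopyMap (k := k) Hrev
        (fun t ht0 ht1 x hx => hHY (1 - t) (by linarith) (by linarith) x hx)
        (fun t ht0 ht1 => hHinj (1 - t) (by linarith) (by linarith))
        (fun t ht0 ht1 x hx => hHrcont t Yset (fun _ h => h) ht0 ht1 x hx)) ?_ ?_⟩
    · intro f
      refine Subtype.ext (funext fun i => Subtype.ext ?_)
      show Hrev (((0 : unitInterval) : ℝ), ↑(f.1 i)) = ↑(((F₁.comp F₂) f).1 i)
      simp only [hHrdef, ContinuousMap.comp_apply, hF₂def, hF₁def, confInduced_apply,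
        hsdef, Set.coe_inclusion]
      norm_num
    · intro f
      refine Subtype.ext (funext fun i => Subtype.ext ?_)
      show Hrev (((1 : unitInterval) : ℝ), ↑(f.1 i)) = ↑(f.1 i)
      simp only [hHrdef]
      norm_num
      exact hH0 _
  exact ⟨ContinuousMap.HomotopyEquiv.mk F₁ F₂ homA homY⟩
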